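/- For real numbers α' < α and a function k : Γ₀ → ℝ with ‖k‖_{α'} := ess sup_η |k(η)|·exp(−α'|η|) < ∞, the multiplication operator (A₁ k)(η) = −(m|η| + E⁻(η))·k(η), where E⁻(η) = Σ_{x∈η}Σ_{y∈η\{x}} a⁻(x−y) with ‖a⁻‖_∞ < ∞, satisfies ‖A₁ k‖_α ≤ ‖k‖_{α'}·( m/(e(α−α')) + 4‖a⁻‖_∞/(e²(α−α')²) ). -/

import Mathlib

open scoped Classical

lemma aux_lin (σ t : ℝ) (hσ : 0 < σ) (ht : 0 ≤ t) :
    t * Real.exp (-(σ * t)) ≤ 1 / (Real.exp 1 * σ) := by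
  have h : σ * t ≤ Real.exp (σ * t - 1) := by
    have := Real.add_one_le_exp (σ * t - 1); linarith
  have hpos : (0:ℝ) < Real.exp (σ * t) := Real.exp_pos _
  rw [Real.exp_sub] at h
  have key : σ * t * Real.exp (-(σ * t)) ≤ Real.exp (-1) := by
    rw [Real.exp_neg, Real.exp_neg]
    calc σ * t * (Real.exp (σ * t))⁻¹
        ≤ (Real.exp (σ * t) / Real.exp 1) * (Real.exp (σ * t))⁻¹ :=
          mul_le_mul_of_nonneg_right h (by positivity)
      _ = (Real.exp 1)⁻¹ := by field_simp
  rw [le_div_iff₀ (by positivity)]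
  calc t * Real.exp (-(σ * t)) * (Real.exp 1 * σ)
      = (σ * t * Real.exp (-(σ * t))) * Real.exp 1 := by ring
    _ ≤ Real.exp (-1) * Real.exp 1 :=
        mul_le_mul_of_nonneg_right key (Real.exp_pos 1).le
    _ = 1 := by rw [← Real.exp_add]; norm_num

lemma aux_sq (σ t : ℝ) (hσ : 0 < σ) (ht : 0 ≤ t) :
    t ^ 2 * Real.exp (-(σ * t)) ≤ 4 / (Real.exp 1 ^ 2 * σ ^ 2) := by
  have h := aux_lin (σ / 2) t (by linarith) ht
  have h2 : t * Real.exp (-(σ / 2 * t)) ≤ 2 / (Real.exp 1 * σ) := by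
    calc t * Real.exp (-(σ / 2 * t)) ≤ 1 / (Real.exp 1 * (σ / 2)) := h
      _ = 2 / (Real.exp 1 * σ) := by
          rw [div_eq_div_iff (by positivity) (by positivity)]; ring
  have hnn : 0 ≤ t * Real.exp (-(σ / 2 * t)) := by positivity
  have hsq := mul_le_mul h2 h2 hnn (by positivity)
  calc t ^ 2 * Real.exp (-(σ * t))
      = (t * Real.exp (-(σ / 2 * t))) * (t * Real.exp (-(σ / 2 * t))) := by
        rw [show (-(σ * t)) = (-(σ / 2 * t)) + (-(σ / 2 * t)) by ring, Real.exp_add]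
        ring
    _ ≤ (2 / (Real.exp 1 * σ)) * (2 / (Real.exp 1 * σ)) := hsq
    _ = 4 / (Real.exp 1 ^ 2 * σ ^ 2) := by
        rw [div_mul_div_comm]; ring_nf

/-- Norm bound for the multiplication operator `A₁`: if `‖k‖_{α'} ≤ K` in the
weighted sup-norm, then `‖A₁ k‖_α ≤ K·(m/(e(α−α')) + 4‖a⁻‖_∞/(e²(α−α')²))`,
stated pointwise for the weighted values. -/
theorem stmt6 {d : ℕ} (aminus : EuclideanSpace ℝ (Fin d) → ℝ) (Ca m α α' K : ℝ)
    (hα : α' < α) (hm : 0 ≤ m) (ha : ∀ x, 0 ≤ aminus x ∧ aminus x ≤ Ca)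
    (k : Finset (EuclideanSpace ℝ (Fin d)) → ℝ) (hK : 0 ≤ K)
    (hk : ∀ η : Finset (EuclideanSpace ℝ (Fin d)),
      |k η| * Real.exp (-(α' * η.card)) ≤ K) :
    ∀ η : Finset (EuclideanSpace ℝ (Fin d)),
      |(-(m * η.card + ∑ x ∈ η, ∑ y ∈ η.erase x, aminus (x - y))) * k η| *
          Real.exp (-(α * η.card)) ≤
        K * (m / (Real.exp 1 * (α - α')) +
          4 * Ca / (Real.exp 1 ^ 2 * (α - α') ^ 2)) := by
  intro η
  set n : ℝ := (η.card : ℝ) with hn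
  have hn0 : 0 ≤ n := Nat.cast_nonneg _
  set E : ℝ := ∑ x ∈ η, ∑ y ∈ η.erase x, aminus (x - y) with hE
  have hCa : 0 ≤ Ca := le_trans (ha 0).1 (ha 0).2
  have hE0 : 0 ≤ E := Finset.sum_nonneg fun x _ =>
    Finset.sum_nonneg fun y _ => (ha (x - y)).1
  have hEle : E ≤ Ca * n ^ 2 := by
    have : E ≤ ∑ x ∈ η, ∑ y ∈ η.erase x, Ca :=
      Finset.sum_le_sum fun x _ => Finset.sum_le_sum fun y _ => (ha (x - y)).2
    have hcard : ∀ x ∈ η, ((η.erase x).card : ℝ) ≤ n := by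
      intro x hx
      exact_mod_cast Nat.cast_le.mpr (Finset.card_le_card (Finset.erase_subset _ _))
    calc E ≤ ∑ x ∈ η, ∑ y ∈ η.erase x, Ca := this
      _ = ∑ x ∈ η, ((η.erase x).card : ℝ) * Ca := by
          simp [Finset.sum_const, mul_comm]
      _ ≤ ∑ x ∈ η, n * Ca := Finset.sum_le_sum fun x hx => by
          exact mul_le_mul_of_nonneg_right (hcard x hx) hCa
      _ = n * (n * Ca) := by simp [Finset.sum_const, hn]
      _ = Ca * n ^ 2 := by ring
  have hσ : 0 < α - α' := by linarith
  have hsplit : Real.exp (-(α * n)) =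
      Real.exp (-(α' * n)) * Real.exp (-((α - α') * n)) := by
    rw [← Real.exp_add]; ring_nf
  have habs : |(-(m * n + E)) * k η| = (m * n + E) * |k η| := by
    rw [abs_mul, abs_neg, abs_of_nonneg (by positivity)]
  have key : |(-(m * n + E)) * k η| * Real.exp (-(α * n))
      = ((m * n + E) * Real.exp (-((α - α') * n))) * (|k η| * Real.exp (-(α' * n))) := by
    rw [habs, hsplit]; ring
  rw [key]
  have hfac : (m * n + E) * Real.exp (-((α - α') * n)) ≤
      m / (Real.exp 1 * (α - α')) + 4 * Ca / (Real.exp 1 ^ 2 * (α - α') ^ 2) := by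
    have h1 := aux_lin (α - α') n hσ hn0
    have h2 := aux_sq (α - α') n hσ hn0
    have hexp : 0 ≤ Real.exp (-((α - α') * n)) := (Real.exp_pos _).le
    calc (m * n + E) * Real.exp (-((α - α') * n))
        ≤ (m * n + Ca * n ^ 2) * Real.exp (-((α - α') * n)) := by
          apply mul_le_mul_of_nonneg_right _ hexp; linarith
      _ = m * (n * Real.exp (-((α - α') * n)))
          + Ca * (n ^ 2 * Real.exp (-((α - α') * n))) := by ring
      _ ≤ m * (1 / (Real.exp 1 * (α - α')))
          + Ca * (4 / (Real.exp 1 ^ 2 * (α - α') ^ 2)) := by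
          gcongr
      _ = m / (Real.exp 1 * (α - α')) + 4 * Ca / (Real.exp 1 ^ 2 * (α - α') ^ 2) := by
          ring
  have hkη := hk η
  have hknn : 0 ≤ |k η| * Real.exp (-(α' * n)) := by positivity
  have hfacnn : 0 ≤ (m * n + E) * Real.exp (-((α - α') * n)) := by positivity
  calc ((m * n + E) * Real.exp (-((α - α') * n))) * (|k η| * Real.exp (-(α' * n)))
      ≤ (m / (Real.exp 1 * (α - α')) + 4 * Ca / (Real.exp 1 ^ 2 * (α - α') ^ 2)) * K :=
        mul_le_mul hfac hkη hknn (by positivity)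
    _ = K * (m / (Real.exp 1 * (α - α')) + 4 * Ca / (Real.exp 1 ^ 2 * (α - α') ^ 2)) := by
        ring
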